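/- Let K be a number field with 3 ∤ [K : ℚ] such that 3 splits completely in K. Then there are no units λ, μ in the ring of integers O_K with λ + μ = 1. -/

import Mathlib

set_option maxHeartbeats 1000000
set_option synthInstance.maxHeartbeats 400000

open NumberField

/-- If `K` is a number field with `3 ∤ [K : ℚ]` in which `3` splits completely
(i.e. `3·O_K` is a product of `[K:ℚ]` distinct prime ideals of residue field `𝔽₃`),
then there are no units `λ, μ` of `O_K` with `λ + μ = 1`. -/
theorem no_unit_equation_of_three_splits_completely
    (K : Type*) [Field K] [NumberField K]
    (hdeg : ¬ (3 ∣ Module.finrank ℚ K))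
    (P : Finset (Ideal (𝓞 K)))
    (hprime : ∀ p ∈ P, p.IsPrime)
    (hres : ∀ p ∈ P, Ideal.absNorm p = 3)
    (hcard : P.card = Module.finrank ℚ K)
    (hprod : ∏ p ∈ P, p = Ideal.span {(3 : 𝓞 K)}) :
    ¬ ∃ (lam mu : (𝓞 K)ˣ), (lam : 𝓞 K) + (mu : 𝓞 K) = 1 := by
  rintro ⟨lam, mu, hsum⟩
  classical
  -- every `p ∈ P` is maximal
  have hmax : ∀ p ∈ P, p.IsMaximal := by
    intro p hp
    have hbot : p ≠ ⊥ := by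
      intro h
      have h3 := Ideal.absNorm_mem p
      rw [hres p hp, h, Ideal.mem_bot] at h3
      norm_num at h3
    exact (hprime p hp).isMaximal hbot
  -- any unit entering a unit equation is ≡ -1 mod every p ∈ P
  have key : ∀ (u v : (𝓞 K)ˣ), (u : 𝓞 K) + (v : 𝓞 K) = 1 → ∀ p ∈ P,
      ((u : 𝓞 K) + 1) ∈ p := by
    intro u v huv p hp
    haveI := hprime p hp
    haveI : p.IsMaximal := hmax p hp
    have hcardQ : Nat.card (𝓞 K ⧸ p) = 3 := by
      rw [← Submodule.cardQuot_apply, ← Ideal.absNorm_apply]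
      exact hres p hp
    haveI : Finite (𝓞 K ⧸ p) := Nat.finite_of_card_ne_zero (by rw [hcardQ]; norm_num)
    haveI : Nontrivial (𝓞 K ⧸ p) := Ideal.Quotient.nontrivial_iff.mpr (hmax p hp).ne_top
    haveI : Fintype (𝓞 K ⧸ p) := Fintype.ofFinite _
    haveI : Nonempty ((𝓞 K ⧸ p)ˣ) := ⟨1⟩
    set x : 𝓞 K ⧸ p := Ideal.Quotient.mk p (u : 𝓞 K) with hxdef
    set y : 𝓞 K ⧸ p := Ideal.Quotient.mk p (v : 𝓞 K) with hydef
    set xu : (𝓞 K ⧸ p)ˣ := Units.map (Ideal.Quotient.mk p).toMonoidHom u with hxudef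
    have hxux : (xu : 𝓞 K ⧸ p) = x := rfl
    have hy0 : y ≠ 0 := (v.isUnit.map (Ideal.Quotient.mk p)).ne_zero
    have hxy : x + y = 1 := by
      rw [hxdef, hydef, ← map_add, huv, map_one]
    have hcardU : Nat.card ((𝓞 K ⧸ p)ˣ) < 3 := by
      have h := card_units_lt (𝓞 K ⧸ p)
      rw [← Nat.card_eq_fintype_card, ← Nat.card_eq_fintype_card] at h
      rw [hcardQ] at h
      exact h
    have hposU : 0 < Nat.card ((𝓞 K ⧸ p)ˣ) := Nat.card_pos
    have hx1 : xu ^ Nat.card ((𝓞 K ⧸ p)ˣ) = 1 := pow_card_eq_one'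
    have hxxu : xu * xu = 1 := by
      have h12 : Nat.card ((𝓞 K ⧸ p)ˣ) = 1 ∨ Nat.card ((𝓞 K ⧸ p)ˣ) = 2 := by
        omega
      rcases h12 with h | h
      · rw [h, pow_one] at hx1
        rw [hx1, one_mul]
      · rw [h, pow_two] at hx1
        exact hx1
    have hxx : x * x = 1 := by
      rw [← hxux, ← Units.val_mul, hxxu, Units.val_one]
    rcases mul_self_eq_one_iff.mp hxx with h1 | h1
    · exfalso
      apply hy0
      have hy : y = 1 - x := by rw [← hxy]; ring
      rw [hy, h1, sub_self]
    · rw [← Ideal.Quotient.eq_zero_iff_mem, map_add, map_one, ← hxdef, h1]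
      exact neg_add_cancel 1
  have hlam : ∀ p ∈ P, ((lam : 𝓞 K) + 1) ∈ p := key lam mu hsum
  have hmu : ∀ p ∈ P, ((mu : 𝓞 K) + 1) ∈ p := key mu lam (by rw [add_comm]; exact hsum)
  -- membership in all p ∈ P gives divisibility by 3
  have hdvd : ∀ z : 𝓞 K, (∀ p ∈ P, z ∈ p) → ∃ w, z = 3 * w := by
    intro z hz
    have hcop : (P : Set (Ideal (𝓞 K))).Pairwise (Function.onFun IsCoprime id) := by
      intro p hp q hq hne
      exact Ideal.isCoprime_iff_sup_eq.mpr
        ((hmax p hp).coprime_of_ne (hmax q hq) hne)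
    have hPdvd : (∏ p ∈ P, p) ∣ Ideal.span {z} := by
      refine Finset.prod_dvd_of_coprime hcop ?_
      intro p hp
      rw [Ideal.dvd_iff_le, Ideal.span_le, Set.singleton_subset_iff]
      exact hz p hp
    rw [hprod] at hPdvd
    have hzmem : z ∈ Ideal.span {(3 : 𝓞 K)} :=
      Ideal.le_of_dvd hPdvd (Ideal.mem_span_singleton_self z)
    rw [Ideal.mem_span_singleton] at hzmem
    obtain ⟨w, hw⟩ := hzmem
    exact ⟨w, hw⟩
  obtain ⟨a, ha⟩ := hdvd _ hlam
  obtain ⟨b, hb⟩ := hdvd _ hmu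
  have hab : a + b = 1 := by
    have h3 : (3 : 𝓞 K) * (a + b) = 3 * 1 := by
      have : (lam : 𝓞 K) + (mu : 𝓞 K) + 2 = 3 * a + 3 * b := by
        rw [← ha, ← hb]; ring
      rw [hsum] at this
      linear_combination -this
    exact mul_left_cancel₀ (by norm_num) h3
  -- trace of a and b are divisible by 3, via norms of units
  have tr3 : ∀ (u : (𝓞 K)ˣ) (c : 𝓞 K), (u : 𝓞 K) + 1 = 3 * c →
      (3 : ℤ) ∣ Algebra.trace ℤ (𝓞 K) c := by
    intro u c hc
    set xx : 𝓞 K := (3 : ℤ) • c ^ 2 - (2 : ℤ) • c with hxxdef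
    have hsq : (u : 𝓞 K) ^ 2 = 1 + (3 : ℤ) • xx := by
      have hu : (u : 𝓞 K) = 3 * c - 1 := by linear_combination hc
      rw [hxxdef]
      simp only [zsmul_eq_mul]
      push_cast
      rw [hu]; ring
    obtain ⟨r, hr⟩ := Algebra.norm_one_add_smul (3 : ℤ) xx
    have hnormu : IsUnit (Algebra.norm ℤ (u : 𝓞 K)) := u.isUnit.map (Algebra.norm ℤ)
    have h2 : Algebra.norm ℤ ((u : 𝓞 K) ^ 2) = 1 := by
      rw [map_pow]
      rcases Int.isUnit_iff.mp hnormu with h | h <;> rw [h] <;> ring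
    rw [hsq, hr] at h2
    have htr : Algebra.trace ℤ (𝓞 K) xx =
        3 * Algebra.trace ℤ (𝓞 K) (c ^ 2) - 2 * Algebra.trace ℤ (𝓞 K) c := by
      rw [hxxdef, map_sub, map_smul, map_smul, smul_eq_mul, smul_eq_mul]
    rw [htr] at h2
    omega
  have htla := tr3 lam a ha
  have htlb := tr3 mu b hb
  have htrone : Algebra.trace ℤ (𝓞 K) 1 = (Module.finrank ℤ (𝓞 K) : ℤ) := by
    have h := Algebra.trace_algebraMap (R := ℤ) (S := 𝓞 K) 1
    simpa using h
  have hsumtr : Algebra.trace ℤ (𝓞 K) a + Algebra.trace ℤ (𝓞 K) b =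
      (Module.finrank ℤ (𝓞 K) : ℤ) := by
    rw [← map_add, hab, htrone]
  have h3n : (3 : ℤ) ∣ (Module.finrank ℤ (𝓞 K) : ℤ) := by omega
  apply hdeg
  rw [← RingOfIntegers.rank]
  exact_mod_cast h3n
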